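/- arXiv:math/0502386 — 4 statements merged into one kernel-verified Lean document; each statement's English description precedes it below -/
import Mathlib

section
/- For a finite poset P, the polynomial (q-1)^2 divides K^v_P(q) - K^λ_P(q), where K^v and K^λ are the upper and lower covering polynomials of P. -/
open Polynomial
open scoped Classical

/-- For a finite poset `α`, `(q-1)²` divides the difference of the upper and
lower covering polynomials `K^v(q) - K^λ(q)`. -/
theorem sq_sub_one_dvd_covering_diff (α : Type*) [Fintype α] [PartialOrder α] :
    (X - 1) ^ 2 ∣
      ((∑ x : α, X ^ (Finset.univ.filter fun y => y ⋖ x).card : Polynomial ℤ) -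
        ∑ x : α, X ^ (Finset.univ.filter fun y => x ⋖ y).card) := by
  set κ : α → ℕ := fun x => (Finset.univ.filter fun y => y ⋖ x).card with hκ
  set ι : α → ℕ := fun x => (Finset.univ.filter fun y => x ⋖ y).card with hι
  have hsum : ∑ x : α, (κ x : ℤ) = ∑ x : α, (ι x : ℤ) := by
    have : ∑ x : α, κ x = ∑ x : α, ι x := by
      simp only [hκ, hι, Finset.card_filter]
      exact Finset.sum_comm
    exact_mod_cast congrArg (Nat.cast : ℕ → ℤ) this
  have key : ∀ n : ℕ, (X : Polynomial ℤ) ^ n - 1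
      = (X - 1) * ∑ i ∈ Finset.range n, X ^ i := by
    intro n; rw [mul_comm, geom_sum_mul]
  set G : (α → ℕ) → Polynomial ℤ :=
    fun f => ∑ x : α, ∑ i ∈ Finset.range (f x), X ^ i with hG
  have hrw : (∑ x : α, (X : Polynomial ℤ) ^ κ x) - ∑ x : α, X ^ ι x
      = (X - 1) * (G κ - G ι) := by
    have h1 : ∀ f : α → ℕ,
        (X - 1) * G f = (∑ x : α, (X : Polynomial ℤ) ^ f x) - (Fintype.card α : ℤ) • 1 := by
      intro f
      rw [hG, Finset.mul_sum]
      simp only [← key]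
      rw [Finset.sum_sub_distrib]
      simp [Finset.card_univ]
    rw [mul_sub, h1, h1]
    ring
  rw [hrw, sq]
  refine mul_dvd_mul_left _ ?_
  rw [show (X - 1 : Polynomial ℤ) = X - C 1 by simp, dvd_iff_isRoot]
  simp only [IsRoot, hG, eval_sub, eval_finset_sum, eval_pow, eval_X, one_pow,
    Finset.sum_const, nsmul_eq_mul, mul_one, Finset.card_range]
  rw [sub_eq_zero]
  exact hsum
end

section
/- Let L be a finite poset and P = J(L) the distributive lattice of order ideals of L ordered by inclusion. Then the upper and lower covering polynomials of P coincide, and for each k the coefficient of q^k in this common polynomial equals the number of k-element antichains in L. -/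
open Polynomial
open scoped Classical

/-- The distributive lattice `J(L)` of order ideals (downward-closed subsets)
of a finite poset `L`, ordered by inclusion. -/
def OrderIdeals (L : Type*) [Fintype L] [PartialOrder L] :=
  {I : Finset L // ∀ x ∈ I, ∀ y, y ≤ x → y ∈ I}

noncomputable instance (L : Type*) [Fintype L] [PartialOrder L] :
    Fintype (OrderIdeals L) := by unfold OrderIdeals; infer_instance

instance (L : Type*) [Fintype L] [PartialOrder L] : PartialOrder (OrderIdeals L) :=
  Subtype.partialOrder _

namespace OIAux

variable {L : Type*} [Fintype L] [PartialOrder L]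

lemma old_exists_minimal (s : Finset L) (h : s.Nonempty) : ∃ m ∈ s, ∀ x ∈ s, ¬ x < m := by
  obtain ⟨m, hm⟩ := Finset.exists_minimal h
  exact ⟨m, hm.1, fun x hx hlt => hlt.not_ge (hm.2 hx hlt.le)⟩

lemma old_exists_maximal (s : Finset L) (h : s.Nonempty) : ∃ m ∈ s, ∀ x ∈ s, ¬ m < x := by
  obtain ⟨m, hm⟩ := Finset.exists_maximal h
  exact ⟨m, hm.1, fun x hx hlt => hlt.not_ge (hm.2 hx hlt.le)⟩

/-- maximal elements of a finset -/
noncomputable def maxSet (I : Finset L) : Finset L :=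
  I.filter fun m => ∀ x ∈ I, m ≤ x → x = m

/-- minimal elements of the complement of an ideal -/
noncomputable def minCompl (I : Finset L) : Finset L :=
  Finset.univ.filter fun m => m ∉ I ∧ ∀ y, y < m → y ∈ I

/-- downward closure of a finset -/
noncomputable def downCl (A : Finset L) : Finset L :=
  Finset.univ.filter fun x => ∃ a ∈ A, x ≤ a

/-- complement of the upward closure of a finset -/
noncomputable def compUp (A : Finset L) : Finset L :=
  Finset.univ.filter fun x => ∀ a ∈ A, ¬ a ≤ x

lemma lt_iff {I J : OrderIdeals L} : I < J ↔ I.1 ⊂ J.1 := by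
  rw [show (I < J) ↔ I.1 < J.1 from Iff.rfl, Finset.lt_iff_ssubset]

lemma erase_mem_ideal (I : OrderIdeals L) {m : L} (hm : m ∈ maxSet I.1) :
    ∀ x ∈ I.1.erase m, ∀ y, y ≤ x → y ∈ I.1.erase m := by
  rw [maxSet, Finset.mem_filter] at hm
  intro x hx y hy
  rw [Finset.mem_erase] at hx ⊢
  refine ⟨?_, I.2 x hx.2 y hy⟩
  rintro rfl
  exact hx.1 (hm.2 x hx.2 hy)

lemma insert_mem_ideal (I : OrderIdeals L) {m : L} (hm : m ∈ minCompl I.1) :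
    ∀ x ∈ insert m I.1, ∀ y, y ≤ x → y ∈ insert m I.1 := by
  rw [minCompl, Finset.mem_filter] at hm
  intro x hx y hy
  rcases Finset.mem_insert.1 hx with rfl | hx
  · rcases eq_or_lt_of_le hy with rfl | h
    · exact Finset.mem_insert_self _ _
    · exact Finset.mem_insert_of_mem (hm.2.2 y h)
  · exact Finset.mem_insert_of_mem (I.2 x hx y hy)

lemma covby_iff_left (I J : OrderIdeals L) :
    J ⋖ I ↔ ∃ m ∈ maxSet I.1, J.1 = I.1.erase m := by
  constructor
  · rintro ⟨hlt, hmax⟩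
    rw [lt_iff] at hlt
    obtain ⟨m, hmI, hmmin⟩ := old_exists_minimal (I.1 \ J.1) (by
      obtain ⟨x, hxI, hxJ⟩ := Finset.exists_of_ssubset hlt
      exact ⟨x, Finset.mem_sdiff.2 ⟨hxI, hxJ⟩⟩)
    rw [Finset.mem_sdiff] at hmI
    have hK : ∀ x ∈ insert m J.1, ∀ y, y ≤ x → y ∈ insert m J.1 := by
      intro x hx y hy
      rcases Finset.mem_insert.1 hx with hxm | hx
      · subst hxm
        rcases eq_or_lt_of_le hy with rfl | hy'
        · exact Finset.mem_insert_self _ _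
        · refine Finset.mem_insert_of_mem ?_
          by_contra hyJ
          exact hmmin y (Finset.mem_sdiff.2 ⟨I.2 x hmI.1 y hy'.le, hyJ⟩) hy'
      · exact Finset.mem_insert_of_mem (J.2 x hx y hy)
    set K : OrderIdeals L := ⟨insert m J.1, hK⟩ with hKdef
    have hJK : J < K := lt_iff.2 (Finset.ssubset_insert hmI.2)
    have hKI : K ≤ I := by
      intro x hx
      rcases Finset.mem_insert.1 hx with rfl | hx
      · exact hmI.1
      · exact hlt.1 hx
    have hKeq : K = I := by
      rcases lt_or_eq_of_le hKI with h | h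
      · exact absurd h (hmax hJK)
      · exact h
    have hIval : I.1 = insert m J.1 := by rw [← hKeq]
    refine ⟨m, ?_, ?_⟩
    · rw [maxSet, Finset.mem_filter]
      refine ⟨hmI.1, ?_⟩
      intro x hx hmx
      by_contra hne
      rw [hIval] at hx
      rcases Finset.mem_insert.1 hx with rfl | hx
      · exact hne rfl
      · exact hmI.2 (J.2 x hx m hmx)
    · rw [hIval, Finset.erase_insert hmI.2]
  · rintro ⟨m, hm, hJ⟩
    have hmI : m ∈ I.1 := (Finset.mem_filter.1 hm).1
    constructor
    · rw [lt_iff, hJ]; exact Finset.erase_ssubset hmI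
    · intro K hJK hKI
      rw [lt_iff] at hJK hKI
      obtain ⟨x, hxK, hxJ⟩ := Finset.exists_of_ssubset hJK
      have hxI : x ∈ I.1 := hKI.1 hxK
      have hxm : x = m := by
        by_contra h
        exact hxJ (hJ ▸ Finset.mem_erase.2 ⟨h, hxI⟩)
      have hsub : I.1 ⊆ K.1 := by
        intro y hy
        by_cases hym : y = m
        · exact hym ▸ hxm ▸ hxK
        · exact hJK.1 (hJ ▸ Finset.mem_erase.2 ⟨hym, hy⟩)
      exact (Finset.ssubset_iff_subset_ne.1 hKI).2
        (Finset.Subset.antisymm hKI.1 hsub)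

lemma covby_iff_right (I J : OrderIdeals L) :
    I ⋖ J ↔ ∃ m ∈ minCompl I.1, J.1 = insert m I.1 := by
  constructor
  · rintro ⟨hlt, hmax⟩
    rw [lt_iff] at hlt
    obtain ⟨m, hmJ, hmmin⟩ := old_exists_minimal (J.1 \ I.1) (by
      obtain ⟨x, hxJ, hxI⟩ := Finset.exists_of_ssubset hlt
      exact ⟨x, Finset.mem_sdiff.2 ⟨hxJ, hxI⟩⟩)
    rw [Finset.mem_sdiff] at hmJ
    have hmMC : m ∈ minCompl I.1 := by
      rw [minCompl, Finset.mem_filter]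
      refine ⟨Finset.mem_univ _, hmJ.2, ?_⟩
      intro y hy
      by_contra hyI
      exact hmmin y (Finset.mem_sdiff.2 ⟨J.2 m hmJ.1 y hy.le, hyI⟩) hy
    set K : OrderIdeals L := ⟨insert m I.1, insert_mem_ideal I hmMC⟩ with hKdef
    have hIK : I < K := lt_iff.2 (Finset.ssubset_insert hmJ.2)
    have hKJ : K ≤ J := by
      intro x hx
      rcases Finset.mem_insert.1 hx with rfl | hx
      · exact hmJ.1
      · exact hlt.1 hx
    have hKeq : K = J := by
      rcases lt_or_eq_of_le hKJ with h | h
      · exact absurd h (hmax hIK)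
      · exact h
    exact ⟨m, hmMC, by rw [← hKeq]⟩
  · rintro ⟨m, hm, hJ⟩
    rw [minCompl, Finset.mem_filter] at hm
    constructor
    · rw [lt_iff, hJ]; exact Finset.ssubset_insert hm.2.1
    · intro K hIK hKJ
      rw [lt_iff] at hIK hKJ
      obtain ⟨x, hxK, hxI⟩ := Finset.exists_of_ssubset hIK
      have hxJ : x ∈ J.1 := hKJ.1 hxK
      have hxm : x = m := by
        rw [hJ] at hxJ
        rcases Finset.mem_insert.1 hxJ with rfl | hx
        · rfl
        · exact absurd hx hxI
      have hsub : J.1 ⊆ K.1 := by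
        rw [hJ]
        intro y hy
        rcases Finset.mem_insert.1 hy with rfl | hy
        · exact hxm ▸ hxK
        · exact hIK.1 hy
      exact (Finset.ssubset_iff_subset_ne.1 hKJ).2
        (Finset.Subset.antisymm hKJ.1 hsub)

lemma card_left (I : OrderIdeals L) :
    (Finset.univ.filter fun J => J ⋖ I).card = (maxSet I.1).card := by
  refine (Finset.card_bij
    (fun m hm => (⟨I.1.erase m, erase_mem_ideal I hm⟩ : OrderIdeals L)) ?_ ?_ ?_).symm
  · intro m hm
    refine Finset.mem_filter.2 ⟨Finset.mem_univ _, ?_⟩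
    exact (covby_iff_left I _).2 ⟨m, hm, rfl⟩
  · intro m1 h1 m2 h2 heq
    have heq' : I.1.erase m1 = I.1.erase m2 := congrArg Subtype.val heq
    have hm1 : m1 ∈ I.1 := (Finset.mem_filter.1 h1).1
    by_contra hne
    have hmem : m1 ∈ I.1.erase m2 := Finset.mem_erase.2 ⟨hne, hm1⟩
    rw [← heq'] at hmem
    exact (Finset.mem_erase.1 hmem).1 rfl
  · intro J hJ
    obtain ⟨m, hm, hJm⟩ := (covby_iff_left I J).1 ((Finset.mem_filter.1 hJ).2)
    exact ⟨m, hm, (Subtype.ext hJm).symm⟩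

lemma card_right (I : OrderIdeals L) :
    (Finset.univ.filter fun J => I ⋖ J).card = (minCompl I.1).card := by
  refine (Finset.card_bij
    (fun m hm => (⟨insert m I.1, insert_mem_ideal I hm⟩ : OrderIdeals L)) ?_ ?_ ?_).symm
  · intro m hm
    refine (Finset.mem_filter (s := (Finset.univ : Finset (OrderIdeals L))) (p := fun J => I ⋖ J)).2 ⟨Finset.mem_univ _, ?_⟩
    exact (covby_iff_right I _).2 ⟨m, hm, rfl⟩
  · intro m1 h1 m2 h2 heq
    have heq' : insert m1 I.1 = insert m2 I.1 := congrArg Subtype.val heq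
    have hm1 : m1 ∉ I.1 := ((Finset.mem_filter.1 h1).2).1
    have : m1 ∈ insert m2 I.1 := heq' ▸ Finset.mem_insert_self _ _
    rcases Finset.mem_insert.1 this with h | h
    · exact h
    · exact absurd h hm1
  · intro J hJ
    obtain ⟨m, hm, hJm⟩ := (covby_iff_right I J).1 ((Finset.mem_filter (s := (Finset.univ : Finset (OrderIdeals L))) (p := fun J => I ⋖ J)).1 hJ).2
    exact ⟨m, hm, (Subtype.ext hJm).symm⟩

lemma maxSet_antichain (I : Finset L) : IsAntichain (· ≤ ·) (maxSet I : Set L) := by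
  intro a ha b hb hne hle
  rw [Finset.mem_coe, maxSet, Finset.mem_filter] at ha hb
  exact hne (ha.2 b hb.1 hle).symm

lemma minCompl_antichain (I : Finset L) :
    IsAntichain (· ≤ ·) (minCompl I : Set L) := by
  intro a ha b hb hne hle
  rw [Finset.mem_coe, minCompl, Finset.mem_filter] at ha hb
  exact ha.2.1 (hb.2.2 a (lt_of_le_of_ne hle hne))

lemma downCl_ideal (A : Finset L) :
    ∀ x ∈ downCl A, ∀ y, y ≤ x → y ∈ downCl A := by
  intro x hx y hy
  rw [downCl, Finset.mem_filter] at hx ⊢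
  obtain ⟨a, ha, hxa⟩ := hx.2
  exact ⟨Finset.mem_univ _, a, ha, hy.trans hxa⟩

lemma compUp_ideal (A : Finset L) :
    ∀ x ∈ compUp A, ∀ y, y ≤ x → y ∈ compUp A := by
  intro x hx y hy
  rw [compUp, Finset.mem_filter] at hx ⊢
  exact ⟨Finset.mem_univ _, fun a ha hay => hx.2 a ha (hay.trans hy)⟩

lemma downCl_maxSet (I : OrderIdeals L) : downCl (maxSet I.1) = I.1 := by
  ext x
  rw [downCl, Finset.mem_filter]
  constructor
  · rintro ⟨-, a, ha, hxa⟩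
    exact I.2 a (Finset.mem_filter.1 ha).1 x hxa
  · intro hx
    obtain ⟨m, hm, hmmax⟩ := old_exists_maximal (I.1.filter fun z => x ≤ z)
      ⟨x, Finset.mem_filter.2 ⟨hx, le_refl x⟩⟩
    rw [Finset.mem_filter] at hm
    refine ⟨Finset.mem_univ _, m, Finset.mem_filter.2 ⟨hm.1, ?_⟩, hm.2⟩
    intro z hz hmz
    by_contra hne
    exact hmmax z (Finset.mem_filter.2 ⟨hz, hm.2.trans hmz⟩)
      (lt_of_le_of_ne hmz fun h => hne h.symm)

lemma maxSet_downCl {A : Finset L} (hA : IsAntichain (· ≤ ·) (A : Set L)) :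
    maxSet (downCl A) = A := by
  ext m
  rw [maxSet, Finset.mem_filter]
  constructor
  · rintro ⟨hm, hmax⟩
    rw [downCl, Finset.mem_filter] at hm
    obtain ⟨-, a, ha, hma⟩ := hm
    have haD : a ∈ downCl A := by
      rw [downCl, Finset.mem_filter]; exact ⟨Finset.mem_univ _, a, ha, le_refl a⟩
    have : a = m := hmax a haD hma
    exact this ▸ ha
  · intro hm
    have hmD : m ∈ downCl A := by
      rw [downCl, Finset.mem_filter]; exact ⟨Finset.mem_univ _, m, hm, le_refl m⟩
    refine ⟨hmD, ?_⟩
    intro x hx hmx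
    rw [downCl, Finset.mem_filter] at hx
    obtain ⟨-, a, ha, hxa⟩ := hx
    have hma : m = a := by
      by_contra hne
      exact hA (Finset.mem_coe.2 hm) (Finset.mem_coe.2 ha) hne (hmx.trans hxa)
    exact le_antisymm (hma ▸ hxa) hmx

lemma compUp_minCompl (I : OrderIdeals L) : compUp (minCompl I.1) = I.1 := by
  ext x
  rw [compUp, Finset.mem_filter]
  constructor
  · rintro ⟨-, h⟩
    by_contra hx
    obtain ⟨a, ha, hamin⟩ := old_exists_minimal
      (Finset.univ.filter fun a => a ∉ I.1 ∧ a ≤ x)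
      ⟨x, Finset.mem_filter.2 ⟨Finset.mem_univ _, hx, le_refl x⟩⟩
    rw [Finset.mem_filter] at ha
    refine h a ?_ ha.2.2
    rw [minCompl, Finset.mem_filter]
    refine ⟨Finset.mem_univ _, ha.2.1, ?_⟩
    intro y hy
    by_contra hyI
    exact hamin y (Finset.mem_filter.2 ⟨Finset.mem_univ _, hyI, hy.le.trans ha.2.2⟩) hy
  · intro hx
    refine ⟨Finset.mem_univ _, ?_⟩
    intro a ha hax
    rw [minCompl, Finset.mem_filter] at ha
    exact ha.2.1 (I.2 x hx a hax)

lemma minCompl_compUp {A : Finset L} (hA : IsAntichain (· ≤ ·) (A : Set L)) :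
    minCompl (compUp A) = A := by
  ext m
  rw [minCompl, Finset.mem_filter]
  constructor
  · rintro ⟨-, hm, hmin⟩
    rw [compUp, Finset.mem_filter] at hm
    push_neg at hm
    obtain ⟨a, ha, ham⟩ := hm (Finset.mem_univ _)
    have : a = m := by
      by_contra hne
      have haC : a ∈ compUp A := hmin a (lt_of_le_of_ne ham hne)
      rw [compUp, Finset.mem_filter] at haC
      exact haC.2 a ha (le_refl a)
    exact this ▸ ha
  · intro hm
    refine ⟨Finset.mem_univ _, ?_, ?_⟩
    · rw [compUp, Finset.mem_filter]
      push_neg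
      intro _
      exact ⟨m, hm, le_refl m⟩
    · intro y hy
      rw [compUp, Finset.mem_filter]
      refine ⟨Finset.mem_univ _, ?_⟩
      intro b hb hby
      have hbm : b ≤ m := hby.trans hy.le
      by_cases hbe : b = m
      · exact absurd (hbe ▸ hby) (not_le_of_gt hy)
      · exact hA (Finset.mem_coe.2 hb) (Finset.mem_coe.2 hm) hbe hbm

/-- The finset of antichains of `L`. -/
noncomputable def antichains (L : Type*) [Fintype L] [PartialOrder L] : Finset (Finset L) :=
  Finset.univ.filter fun A : Finset L => IsAntichain (· ≤ ·) (A : Set L)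

lemma sum_left :
    (∑ I : OrderIdeals L, (X : Polynomial ℤ) ^ (maxSet I.1).card) =
      ∑ A ∈ antichains L, X ^ A.card := by
  refine Finset.sum_bij (fun I _ => maxSet I.1) ?_ ?_ ?_ ?_
  · intro I _
    rw [antichains, Finset.mem_filter]
    exact ⟨Finset.mem_univ _, maxSet_antichain I.1⟩
  · intro I1 _ I2 _ h
    have h' : maxSet I1.1 = maxSet I2.1 := h
    apply Subtype.ext
    rw [← downCl_maxSet I1, ← downCl_maxSet I2, h']
  · intro A hA
    rw [antichains, Finset.mem_filter] at hA
    exact ⟨⟨downCl A, downCl_ideal A⟩, Finset.mem_univ _, maxSet_downCl hA.2⟩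
  · intro I _
    rfl

lemma sum_right :
    (∑ I : OrderIdeals L, (X : Polynomial ℤ) ^ (minCompl I.1).card) =
      ∑ A ∈ antichains L, X ^ A.card := by
  refine Finset.sum_bij (fun I _ => minCompl I.1) ?_ ?_ ?_ ?_
  · intro I _
    rw [antichains, Finset.mem_filter]
    exact ⟨Finset.mem_univ _, minCompl_antichain I.1⟩
  · intro I1 _ I2 _ h
    have h' : minCompl I1.1 = minCompl I2.1 := h
    apply Subtype.ext
    rw [← compUp_minCompl I1, ← compUp_minCompl I2, h']
  · intro A hA
    rw [antichains, Finset.mem_filter] at hA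
    exact ⟨⟨compUp A, compUp_ideal A⟩, Finset.mem_univ _, minCompl_compUp hA.2⟩
  · intro I _
    rfl


end OIAux

/-- For `P = J(L)` the lattice of order ideals of a finite poset `L`, the upper
and lower covering polynomials of `P` coincide, and the coefficient of `q^k` in
the common polynomial equals the number of `k`-element antichains in `L`. -/
theorem covering_polys_orderIdeals (L : Type*) [Fintype L] [PartialOrder L] :
    ((∑ I : OrderIdeals L, X ^ (Finset.univ.filter fun J => J ⋖ I).card : Polynomial ℤ) =
        ∑ I : OrderIdeals L, X ^ (Finset.univ.filter fun J => I ⋖ J).card) ∧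
      ∀ k : ℕ,
        (∑ I : OrderIdeals L, X ^ (Finset.univ.filter fun J => J ⋖ I).card :
            Polynomial ℤ).coeff k =
          ((Finset.univ : Finset (Finset L)).filter fun A : Finset L =>
            IsAntichain (· ≤ ·) (A : Set L) ∧ A.card = k).card := by
  have hL : (∑ I : OrderIdeals L, X ^ (Finset.univ.filter fun J => J ⋖ I).card : Polynomial ℤ) =
      ∑ A ∈ OIAux.antichains L, X ^ A.card := by
    rw [← OIAux.sum_left]
    exact Finset.sum_congr rfl fun I _ => by rw [OIAux.card_left]
  have hR : (∑ I : OrderIdeals L, X ^ (Finset.univ.filter fun J => I ⋖ J).card : Polynomial ℤ) =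
      ∑ A ∈ OIAux.antichains L, X ^ A.card := by
    rw [← OIAux.sum_right]
    exact Finset.sum_congr rfl fun I _ => by rw [OIAux.card_right]
  refine ⟨hL.trans hR.symm, ?_⟩
  intro k
  rw [hL, Polynomial.finset_sum_coeff]
  simp_rw [Polynomial.coeff_X_pow]
  have hsum : (∑ A ∈ OIAux.antichains L, if k = A.card then (1 : ℤ) else 0) =
      (((OIAux.antichains L).filter fun A => k = A.card).card : ℤ) :=
    Finset.sum_boole _ _
  rw [hsum, OIAux.antichains, Finset.filter_filter]
  congr 1
  apply congrArg
  apply Finset.filter_congr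
  intro A _
  constructor
  · rintro ⟨h1, h2⟩; exact ⟨h1, h2.symm⟩
  · rintro ⟨h1, h2⟩; exact ⟨h1, h2.symm⟩
end

section
/- The number of k-element antichains in the rectangular poset R(n, n+1) = [n] × [n+1] (product of two chains) equals C(n,k)·C(n+1,k). -/
open scoped Classical

open Finset

private lemma fst_injOn {n : ℕ} {A : Finset (Fin n × Fin (n+1))}
    (hA : IsAntichain (· ≤ ·) (A : Set (Fin n × Fin (n+1)))) :
    Set.InjOn Prod.fst (A : Set (Fin n × Fin (n+1))) := by
  intro p hp q hq h
  by_contra hne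
  rcases le_total p.2 q.2 with h2 | h2
  · exact hA hp hq hne (Prod.le_def.mpr ⟨le_of_eq h, h2⟩)
  · exact hA hq hp (Ne.symm hne) (Prod.le_def.mpr ⟨le_of_eq h.symm, h2⟩)

private lemma snd_injOn {n : ℕ} {A : Finset (Fin n × Fin (n+1))}
    (hA : IsAntichain (· ≤ ·) (A : Set (Fin n × Fin (n+1)))) :
    Set.InjOn Prod.snd (A : Set (Fin n × Fin (n+1))) := by
  intro p hp q hq h
  by_contra hne
  rcases le_total p.1 q.1 with h1 | h1
  · exact hA hp hq hne (Prod.le_def.mpr ⟨h1, le_of_eq h⟩)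
  · exact hA hq hp (Ne.symm hne) (Prod.le_def.mpr ⟨h1, le_of_eq h.symm⟩)

private noncomputable def rect {n : ℕ} (k : ℕ) (S : Finset (Fin n)) (T : Finset (Fin (n+1))) :
    Finset (Fin n × Fin (n+1)) :=
  if h : S.card = k ∧ T.card = k then
    (univ : Finset (Fin k)).image fun i => (S.orderEmbOfFin h.1 i, T.orderEmbOfFin h.2 i.rev)
  else ∅

private lemma rect_spec {n k : ℕ} {S : Finset (Fin n)} {T : Finset (Fin (n+1))}
    (hS : S.card = k) (hT : T.card = k) :
    IsAntichain (· ≤ ·) ((rect k S T : Finset (Fin n × Fin (n+1))) : Set (Fin n × Fin (n+1))) ∧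
      (rect k S T).card = k ∧ (rect k S T).image Prod.fst = S ∧
      (rect k S T).image Prod.snd = T := by
  have hr : rect k S T =
      (univ : Finset (Fin k)).image fun i => (S.orderEmbOfFin hS i, T.orderEmbOfFin hT i.rev) := by
    rw [rect, dif_pos ⟨hS, hT⟩]
  set e := S.orderEmbOfFin hS with he
  set f := T.orderEmbOfFin hT with hf
  have hinj : Function.Injective fun i : Fin k => (e i, f i.rev) := by
    intro i j hij
    exact e.injective (congrArg Prod.fst hij)
  have hcard : (rect k S T).card = k := by
    rw [hr, card_image_of_injective _ hinj, card_univ, Fintype.card_fin]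
  refine ⟨?_, hcard, ?_, ?_⟩
  · intro x hx y hy hne hle
    rw [hr] at hx hy
    simp only [coe_image, Set.mem_image, coe_univ, Set.mem_univ] at hx hy
    obtain ⟨i, -, rfl⟩ := hx
    obtain ⟨j, -, rfl⟩ := hy
    have h1 : e i ≤ e j := hle.1
    have h2 : f i.rev ≤ f j.rev := hle.2
    have hij : i ≤ j := e.le_iff_le.mp h1
    have hji : j ≤ i := Fin.rev_le_rev.mp (f.le_iff_le.mp h2)
    exact hne (by rw [le_antisymm hij hji])
  · rw [hr, image_image]
    refine eq_of_subset_of_card_le (fun x hx => ?_) ?_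
    · simp only [mem_image, mem_univ, Function.comp] at hx
      obtain ⟨i, -, rfl⟩ := hx
      exact S.orderEmbOfFin_mem hS i
    · have : Function.Injective (Prod.fst ∘ fun i : Fin k => (e i, f i.rev)) := e.injective
      rw [hS, card_image_of_injective _ this, card_univ, Fintype.card_fin]
  · rw [hr, image_image]
    refine eq_of_subset_of_card_le (fun x hx => ?_) ?_
    · simp only [mem_image, mem_univ, Function.comp] at hx
      obtain ⟨i, -, rfl⟩ := hx
      exact T.orderEmbOfFin_mem hT i.rev
    · have : Function.Injective (Prod.snd ∘ fun i : Fin k => (e i, f i.rev)) :=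
        f.injective.comp Fin.rev_injective
      rw [hT, card_image_of_injective _ this, card_univ, Fintype.card_fin]

private lemma antichain_eq_rect {n k : ℕ} {A : Finset (Fin n × Fin (n+1))}
    (hA : IsAntichain (· ≤ ·) (A : Set (Fin n × Fin (n+1)))) (hcard : A.card = k) :
    A = rect k (A.image Prod.fst) (A.image Prod.snd) := by
  have hS : (A.image Prod.fst).card = k := by
    rw [card_image_of_injOn (fst_injOn hA), hcard]
  have hT : (A.image Prod.snd).card = k := by
    rw [card_image_of_injOn (snd_injOn hA), hcard]
  set e := (A.image Prod.fst).orderEmbOfFin hS with he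
  set f := (A.image Prod.snd).orderEmbOfFin hT with hf
  have hex : ∀ i : Fin k, ∃ p, p ∈ A ∧ p.1 = e i := by
    intro i
    have := (A.image Prod.fst).orderEmbOfFin_mem hS i
    rwa [mem_image] at this
  choose p hpA hp1 using hex
  have hanti : ∀ i j : Fin k, i < j → (p j).2 < (p i).2 := by
    intro i j hij
    have h1 : (p i).1 < (p j).1 := by rw [hp1, hp1]; exact e.strictMono hij
    by_contra hle
    push_neg at hle
    exact hA (hpA i) (hpA j) (fun h => absurd (congrArg Prod.fst h) h1.ne)
      (Prod.le_def.mpr ⟨h1.le, hle⟩)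
  have hg : (fun i : Fin k => (p i.rev).2) = f := by
    apply orderEmbOfFin_unique
    · intro i
      exact mem_image_of_mem Prod.snd (hpA i.rev)
    · intro i j hij
      exact hanti j.rev i.rev (Fin.rev_lt_rev.mpr hij)
  have hp2 : ∀ i : Fin k, (p i).2 = f i.rev := by
    intro i
    have := congrFun hg i.rev
    simpa [Fin.rev_rev] using this
  have hpinj : Function.Injective p := by
    intro i j hij
    have := congrArg Prod.fst hij
    rw [hp1, hp1] at this
    exact e.injective this
  have hAeq : A = (univ : Finset (Fin k)).image p := by
    refine (eq_of_subset_of_card_le (fun x hx => ?_) ?_).symm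
    · simp only [mem_image, mem_univ] at hx
      obtain ⟨i, -, rfl⟩ := hx
      exact hpA i
    · rw [hcard, card_image_of_injective _ hpinj, card_univ, Fintype.card_fin]
  rw [rect, dif_pos ⟨hS, hT⟩]
  conv_lhs => rw [hAeq]
  apply image_congr
  intro i _
  exact Prod.ext (hp1 i) (hp2 i)

/-- The number of `k`-element antichains in the rectangular poset
`R(n, n+1) = [n] × [n+1]` (product of two chains) is `C(n,k)·C(n+1,k)`. -/
theorem antichains_rectangle (n k : ℕ) :
    ((Finset.univ : Finset (Finset (Fin n × Fin (n + 1)))).filter fun A : Finset (Fin n × Fin (n + 1)) =>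
        IsAntichain (· ≤ ·) (A : Set (Fin n × Fin (n + 1))) ∧ A.card = k).card =
      n.choose k * (n + 1).choose k := by
  have key : ((Finset.univ : Finset (Finset (Fin n × Fin (n + 1)))).filter
      fun A : Finset (Fin n × Fin (n + 1)) =>
        IsAntichain (· ≤ ·) (A : Set (Fin n × Fin (n + 1))) ∧ A.card = k).card =
      ((powersetCard k (univ : Finset (Fin n))) ×ˢ
        (powersetCard k (univ : Finset (Fin (n+1))))).card := by
    refine Finset.card_bij' (fun A _ => (A.image Prod.fst, A.image Prod.snd))
      (fun b _ => rect k b.1 b.2) ?_hi ?_hj ?_li ?_ri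
    case _hi =>
      intro A hA
      rw [mem_filter] at hA
      obtain ⟨-, hanti, hcard⟩ := hA
      rw [mem_product, mem_powersetCard, mem_powersetCard]
      exact ⟨⟨subset_univ _, by rw [card_image_of_injOn (fst_injOn hanti), hcard]⟩,
        ⟨subset_univ _, by rw [card_image_of_injOn (snd_injOn hanti), hcard]⟩⟩
    case _hj =>
      intro b hb
      rw [mem_product, mem_powersetCard, mem_powersetCard] at hb
      obtain ⟨⟨-, h1⟩, -, h2⟩ := hb
      obtain ⟨ha, hc, -, -⟩ := rect_spec h1 h2
      exact mem_filter.mpr ⟨mem_univ _, ha, hc⟩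
    case _li =>
      intro A hA
      rw [mem_filter] at hA
      exact (antichain_eq_rect hA.2.1 hA.2.2).symm
    case _ri =>
      intro b hb
      rw [mem_product, mem_powersetCard, mem_powersetCard] at hb
      obtain ⟨⟨-, h1⟩, -, h2⟩ := hb
      obtain ⟨-, -, hS, hT⟩ := rect_spec h1 h2
      exact Prod.ext hS hT
  rw [key, card_product, card_powersetCard, card_powersetCard, card_univ, card_univ,
    Fintype.card_fin, Fintype.card_fin]
end

section
/- Let P̃ be a finite distributive lattice and P ⊆ P̃ a down-closed subposet (if I ∈ P and I' ≤ I in P̃ then I' ∈ P). Then 2Δ_P(1) = #{wedge-triples} − #{vee-triples} ≤ 0, where a wedge-triple is (x, y₁, y₂) with y₁ ≠ y₂ both covered by x and a vee-triple is (x₁, x₂, y) with x₁ ≠ x₂ both covering y. Moreover, equality holds iff P is a distributive lattice. -/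
open scoped Classical

set_option linter.unusedSectionVars false
set_option maxHeartbeats 1000000


section Aux
variable {β : Type*} [Fintype β]

lemma card_pairs (s : Finset β) :
    (Finset.univ.filter fun p : β × β => p.1 ≠ p.2 ∧ p.1 ∈ s ∧ p.2 ∈ s).card
      = s.card * (s.card - 1) := by
  have h0 : (Finset.univ.filter fun p : β × β => p.1 ≠ p.2 ∧ p.1 ∈ s ∧ p.2 ∈ s)
      = (s ×ˢ s).filter fun p => ¬ p.1 = p.2 := by
    ext p; simp [Finset.mem_product]; tauto
  have h1 : ((s ×ˢ s).filter fun p : β × β => p.1 = p.2).card = s.card := by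
    apply Finset.card_nbij' (fun p => p.1) (fun a => (a, a)) <;>
      simp +contextual [Finset.mem_product, Set.MapsTo, Set.LeftInvOn, Set.RightInvOn]
  have h2 := Finset.card_filter_add_card_filter_not
    (s := s ×ˢ s) (p := fun p : β × β => p.1 = p.2)
  rw [Finset.card_product, h1] at h2
  rw [h0]
  cases h : s.card with
  | zero => rw [h] at h2; omega
  | succ k =>
    have h3 : (k+1)*(k+1) = (k+1)*k + (k+1) := by ring
    rw [h] at h2
    simp only [Nat.add_sub_cancel]
    omega

lemma card_wedge (r : β → β → Prop) :
    (Finset.univ.filter fun t : β × β × β => t.2.1 ≠ t.2.2 ∧ r t.2.1 t.1 ∧ r t.2.2 t.1).card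
      = ∑ x : β, (Finset.univ.filter fun y => r y x).card
          * ((Finset.univ.filter fun y => r y x).card - 1) := by
  rw [Finset.card_eq_sum_card_fiberwise (f := fun t : β × β × β => t.1)
    (t := Finset.univ) (fun x _ => Finset.mem_univ _)]
  refine Finset.sum_congr rfl fun x _ => ?_
  rw [← card_pairs (Finset.univ.filter fun y => r y x)]
  apply Finset.card_nbij' (fun t : β × β × β => (t.2.1, t.2.2)) (fun p => (x, p.1, p.2))
  · rintro ⟨x', y₁, y₂⟩ ht
    simp only [Finset.mem_coe, Finset.mem_filter, Finset.mem_univ, true_and] at ht ⊢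
    obtain ⟨⟨hne, h1, h2⟩, rfl⟩ := ht
    exact ⟨hne, h1, h2⟩
  · rintro ⟨y₁, y₂⟩ hp
    simp only [Finset.mem_coe, Finset.mem_filter, Finset.mem_univ, true_and] at hp ⊢
    exact ⟨⟨hp.1, hp.2.1, hp.2.2⟩, trivial⟩
  · rintro ⟨x', y₁, y₂⟩ ht
    simp only [Finset.mem_coe, Finset.mem_filter, Finset.mem_univ, true_and] at ht
    obtain ⟨-, rfl⟩ := ht
    rfl
  · rintro ⟨y₁, y₂⟩ _; rfl

lemma card_vee (r : β → β → Prop) :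
    (Finset.univ.filter fun t : β × β × β => t.1 ≠ t.2.1 ∧ r t.2.2 t.1 ∧ r t.2.2 t.2.1).card
      = ∑ y : β, (Finset.univ.filter fun x => r y x).card
          * ((Finset.univ.filter fun x => r y x).card - 1) := by
  rw [Finset.card_eq_sum_card_fiberwise (f := fun t : β × β × β => t.2.2)
    (t := Finset.univ) (fun x _ => Finset.mem_univ _)]
  refine Finset.sum_congr rfl fun y _ => ?_
  rw [← card_pairs (Finset.univ.filter fun x => r y x)]
  apply Finset.card_nbij' (fun t : β × β × β => (t.1, t.2.1)) (fun p => (p.1, p.2, y))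
  · rintro ⟨x₁, x₂, y'⟩ ht
    simp only [Finset.mem_coe, Finset.mem_filter, Finset.mem_univ, true_and] at ht ⊢
    obtain ⟨⟨hne, h1, h2⟩, rfl⟩ := ht
    exact ⟨hne, h1, h2⟩
  · rintro ⟨x₁, x₂⟩ hp
    simp only [Finset.mem_coe, Finset.mem_filter, Finset.mem_univ, true_and] at hp ⊢
    exact ⟨⟨hp.1, hp.2.1, hp.2.2⟩, trivial⟩
  · rintro ⟨x₁, x₂, y'⟩ ht
    simp only [Finset.mem_coe, Finset.mem_filter, Finset.mem_univ, true_and] at ht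
    obtain ⟨-, rfl⟩ := ht
    rfl
  · rintro ⟨x₁, x₂⟩ _; rfl

lemma eval_d2_pow (n : ℕ) :
    (Polynomial.derivative (Polynomial.derivative ((Polynomial.X : Polynomial ℤ) ^ n))).eval 1
      = (n : ℤ) * ((n - 1 : ℕ) : ℤ) := by
  rw [Polynomial.derivative_X_pow]
  simp [Polynomial.derivative_X_pow]

lemma eval_d2_target (D : Polynomial ℤ) :
    (Polynomial.derivative (Polynomial.derivative ((Polynomial.X - 1) ^ 2 * D))).eval 1
      = 2 * D.eval 1 := by
  have h1 : Polynomial.derivative ((Polynomial.X - 1) ^ 2 * D)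
      = 2 * (Polynomial.X - 1) * D + (Polynomial.X - 1) ^ 2 * Polynomial.derivative D := by
    rw [Polynomial.derivative_mul, Polynomial.derivative_pow]
    simp
  rw [h1]
  simp [Polynomial.derivative_add, Polynomial.derivative_mul, Polynomial.derivative_pow]

end Aux

section Aux2
variable {α : Type*} [Fintype α] [DistribLattice α]

lemma covP_iff {P : Set α} (hdc : ∀ ⦃x y : α⦄, x ∈ P → y ≤ x → y ∈ P)
    (a b : ↥P) : a ⋖ b ↔ (a : α) ⋖ (b : α) := by
  constructor
  · rintro ⟨hlt, h⟩
    refine ⟨hlt, fun c hc hcb => ?_⟩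
    exact h (c := ⟨c, hdc b.2 hcb.le⟩) (by exact hc) (by exact hcb)
  · rintro ⟨hlt, h⟩
    exact ⟨hlt, fun c hc hcb => h hc hcb⟩

lemma wedge_eq_sup {P : Set α} (hdc : ∀ ⦃x y : α⦄, x ∈ P → y ≤ x → y ∈ P)
    {x y₁ y₂ : ↥P} (hne : y₁ ≠ y₂) (h₁ : y₁ ⋖ x) (h₂ : y₂ ⋖ x) :
    (x : α) = (y₁ : α) ⊔ (y₂ : α) := by
  have h₁' := (covP_iff hdc _ _).1 h₁
  have h₂' := (covP_iff hdc _ _).1 h₂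
  have hle : (y₁ : α) ⊔ (y₂ : α) ≤ x := sup_le h₁'.le h₂'.le
  have hne' : (y₁ : α) ≠ y₂ := fun h => hne (Subtype.ext h)
  have hy1lt : (y₁ : α) < (y₁ : α) ⊔ (y₂ : α) := by
    rcases lt_or_eq_of_le (le_sup_left : (y₁ : α) ≤ (y₁ : α) ⊔ (y₂ : α)) with h | h
    · exact h
    · exfalso
      have : (y₂ : α) ≤ y₁ := by
        have := le_sup_right (a := (y₁ : α)) (b := (y₂ : α)); rw [← h] at this; exact this
      exact h₂'.2 (lt_of_le_of_ne this hne'.symm) h₁'.lt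
  rcases lt_or_eq_of_le hle with h | h
  · exact absurd h (h₁'.2 hy1lt)
  · exact h.symm

lemma wedge_inf_covBy {P : Set α} (hdc : ∀ ⦃x y : α⦄, x ∈ P → y ≤ x → y ∈ P)
    {x y₁ y₂ : ↥P} (hne : y₁ ≠ y₂) (h₁ : y₁ ⋖ x) (h₂ : y₂ ⋖ x) :
    ((y₁ : α) ⊓ (y₂ : α) ⋖ (y₁ : α)) ∧ ((y₁ : α) ⊓ (y₂ : α) ⋖ (y₂ : α)) := by
  have hx := wedge_eq_sup hdc hne h₁ h₂
  have h₁' := (covP_iff hdc _ _).1 h₁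
  have h₂' := (covP_iff hdc _ _).1 h₂
  rw [hx] at h₁' h₂'
  exact ⟨inf_covBy_of_covBy_sup_right h₂', inf_covBy_of_covBy_sup_left h₁'⟩


lemma sup_mem_of_vee (P : Set α) (hdc : ∀ ⦃x y : α⦄, x ∈ P → y ≤ x → y ∈ P)
    (hvee : ∀ y a b : α, y ∈ P → a ∈ P → b ∈ P → a ≠ b → y ⋖ a → y ⋖ b → a ⊔ b ∈ P) :
    ∀ a ∈ P, ∀ b ∈ P, a ⊔ b ∈ P := by
  set N := Fintype.card α + 1 with hN
  set I : α → α → Finset α := fun a b => Finset.univ.filter fun z => a ⊓ b ≤ z ∧ z ≤ a with hI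
  set S : α → Finset α := fun a => Finset.univ.filter fun z => a ≤ z with hS
  set μ : α → α → ℕ := fun a b => N * (I a b).card + (S a).card with hμdef
  have hScard : ∀ a, (S a).card < N := fun a =>
    lt_of_le_of_lt (Finset.card_le_card (Finset.subset_univ _)) (by simp [hN])
  suffices H : ∀ n, ∀ a ∈ P, ∀ b ∈ P, μ a b ≤ n → a ⊔ b ∈ P by
    intro a ha b hb; exact H (μ a b) a ha b hb le_rfl
  intro n
  induction n using Nat.strong_induction_on with
  | _ n ih =>
  intro a ha b hb hμn
  by_cases hab : a ≤ b
  · rw [sup_eq_right.2 hab]; exact hb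
  by_cases hba : b ≤ a
  · rw [sup_eq_left.2 hba]; exact ha
  -- m < a
  have hma : a ⊓ b < a := lt_of_le_of_ne inf_le_left (fun h => hab (inf_eq_left.1 h))
  -- pick a' : maximal with a ⊓ b ≤ a' < a
  obtain ⟨a', ha'mem, ha'max⟩ := Finset.exists_maximal
    (s := Finset.univ.filter fun z => a ⊓ b ≤ z ∧ z < a)
    ⟨a ⊓ b, by simp [hma]⟩
  simp only [Finset.mem_filter, Finset.mem_univ, true_and] at ha'mem
  obtain ⟨hma', ha'a⟩ := ha'mem
  have hcov : a' ⋖ a := by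
    refine ⟨ha'a, fun z h1 h2 => ?_⟩
    exact (not_le_of_gt h1) (ha'max (y := z) (by simp [le_trans hma' h1.le, h2]) h1.le)
  have ha'P : a' ∈ P := hdc ha ha'a.le
  -- a' ⊓ b = a ⊓ b
  have ha'b : a' ⊓ b = a ⊓ b :=
    le_antisymm (inf_le_inf_right b ha'a.le) (le_inf hma' inf_le_right)
  -- measure decrease, call 1
  have hIsub : I a' b ⊂ I a b := by
    constructor
    · intro z hz
      simp only [hI, Finset.mem_filter, Finset.mem_univ, true_and, ha'b] at hz ⊢
      exact ⟨hz.1, hz.2.trans ha'a.le⟩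
    · intro hcon
      have : a ∈ I a' b := hcon (by simp [hI])
      simp only [hI, Finset.mem_filter] at this
      exact absurd this.2.2 (not_le_of_gt ha'a)
  have hμ1 : μ a' b < μ a b := by
    have h1 : (I a' b).card + 1 ≤ (I a b).card := Finset.card_lt_card hIsub
    have h2 := hScard a'
    have h3 : N * (I a' b).card + N ≤ N * (I a b).card := by
      have := Nat.mul_le_mul_left N h1
      rw [Nat.mul_add, Nat.mul_one] at this
      exact this
    simp only [hμdef]
    omega
  have hc : a' ⊔ b ∈ P := ih (μ a' b) (lt_of_lt_of_le hμ1 hμn) a' ha'P b hb le_rfl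
  set c := a' ⊔ b with hcdef
  by_cases hacle : a ≤ c
  · have : a ⊔ b = c := le_antisymm (sup_le hacle le_sup_right)
      (sup_le (le_trans ha'a.le le_sup_left) le_sup_right)
    rw [this]; exact hc
  -- a ⊓ c = a'
  have hac : a ⊓ c = a' := by
    have h1 : a' ≤ a ⊓ c := le_inf ha'a.le le_sup_left
    rcases lt_or_eq_of_le h1 with h | h
    · exact absurd (lt_of_le_of_ne inf_le_left (fun hh => hacle (inf_eq_left.1 hh)))
        (hcov.2 h)
    · exact h.symm
  have ha'c : a' < c := lt_of_le_of_ne le_sup_left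
    (fun h => hba (le_trans (le_sup_right.trans h.symm.le) ha'a.le))
  -- pick d : minimal with a' < d ≤ c
  obtain ⟨d, hdmem, hdmin⟩ := Finset.exists_minimal
    (s := Finset.univ.filter fun z => a' < z ∧ z ≤ c) ⟨c, by simp [ha'c]⟩
  simp only [Finset.mem_filter, Finset.mem_univ, true_and] at hdmem
  obtain ⟨ha'd, hdc'⟩ := hdmem
  have hcovd : a' ⋖ d := by
    refine ⟨ha'd, fun z h1 h2 => ?_⟩
    exact (not_le_of_gt h2) (hdmin (y := z) (by simp [h1, le_trans h2.le hdc']) h2.le)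
  have hdP : d ∈ P := hdc hc hdc'
  have hda : d ≠ a := fun h => hacle (h ▸ hdc')
  have heP : a ⊔ d ∈ P := hvee a' a d ha'P ha hdP (Ne.symm hda) hcov hcovd
  set e := a ⊔ d with hedef
  have had : a ⊓ d = a' :=
    le_antisymm (hac ▸ inf_le_inf_left a hdc') (le_inf ha'a.le ha'd.le)
  have hde : d ⋖ e := covBy_sup_of_inf_covBy_left (had ▸ hcov)
  have hec : e ⊓ c = d := by
    rw [hedef, inf_sup_right, hac, inf_eq_left.2 hdc', sup_eq_right.2 ha'd.le]
  have htarget : e ⊔ c = a ⊔ b := by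
    apply le_antisymm
    · exact sup_le (sup_le le_sup_left (hdc'.trans (sup_le (ha'a.le.trans le_sup_left) le_sup_right)))
        (sup_le (ha'a.le.trans le_sup_left) le_sup_right)
    · exact sup_le (le_sup_left.trans le_sup_left) (le_sup_right.trans le_sup_right)
  have hae : a < e := by
    refine lt_of_le_of_ne le_sup_left fun h => ?_
    have h1 : d ≤ a := by rw [h]; exact le_sup_right
    exact absurd (had ▸ le_inf h1 le_rfl) (not_le_of_gt ha'd)
  -- measure for (e, c)
  have hIec : I e c = {d, e} := by
    ext z
    simp only [hI, Finset.mem_filter, Finset.mem_univ, true_and, hec,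
      Finset.mem_insert, Finset.mem_singleton]
    constructor
    · rintro ⟨h1, h2⟩
      rcases lt_or_eq_of_le h1 with h | h
      · right
        rcases lt_or_eq_of_le h2 with h' | h'
        · exact absurd h' (hde.2 h)
        · exact h'
      · exact Or.inl h.symm
    · rintro (rfl | rfl)
      · exact ⟨le_rfl, hde.lt.le⟩
      · exact ⟨hde.lt.le, le_rfl⟩
  have hIeccard : (I e c).card = 2 := by
    rw [hIec, Finset.card_insert_of_notMem (by simp [hde.lt.ne]), Finset.card_singleton]
  have hIab2 : 2 ≤ (I a b).card := by
    have : ({a ⊓ b, a} : Finset α) ⊆ I a b := by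
      intro z hz
      simp only [Finset.mem_insert, Finset.mem_singleton] at hz
      rcases hz with rfl | rfl <;> simp [hI, inf_le_left, hma.le]
    calc 2 = ({a ⊓ b, a} : Finset α).card := by
            rw [Finset.card_insert_of_notMem (by simp [hma.ne]), Finset.card_singleton]
      _ ≤ _ := Finset.card_le_card this
  have hSec : (S e).card < (S a).card := by
    apply Finset.card_lt_card
    constructor
    · intro z hz
      simp only [hS, Finset.mem_filter, Finset.mem_univ, true_and] at hz ⊢
      exact hae.le.trans hz
    · intro hcon
      have : a ∈ S e := hcon (by simp [hS])
      simp only [hS, Finset.mem_filter] at this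
      exact absurd this.2 (not_le_of_gt hae)
  have hμ2 : μ e c < μ a b := by
    simp only [hμdef, hIeccard]
    have := Nat.mul_le_mul_left N hIab2
    omega
  have := ih (μ e c) (lt_of_lt_of_le hμ2 hμn) e heP c hc le_rfl
  rw [htarget] at this
  exact this

end Aux2



/-- Let `P̃` be a finite distributive lattice and `P ⊆ P̃` a down-closed
subposet. With covering relations taken inside `P`, let `W` be the number of
wedge-triples `(x, y₁, y₂)` (with `y₁ ≠ y₂` both covered by `x`) and `Vee` the
number of vee-triples `(x₁, x₂, y)` (with `x₁ ≠ x₂` both covering `y`). Then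
for any polynomial `D` with `K^v_P - K^λ_P = (q-1)² D` one has
`2·D(1) = W - Vee ≤ 0`, with equality iff `P` is a distributive lattice. -/
theorem deviation_downclosed_subposet {α : Type*} [Fintype α] [DistribLattice α]
    (P : Set α) (hdc : ∀ ⦃x y : α⦄, x ∈ P → y ≤ x → y ∈ P)
    (W Vee : ℕ)
    (hW : W = (Finset.univ.filter fun t : ↥P × ↥P × ↥P =>
      t.2.1 ≠ t.2.2 ∧ t.2.1 ⋖ t.1 ∧ t.2.2 ⋖ t.1).card)
    (hV : Vee = (Finset.univ.filter fun t : ↥P × ↥P × ↥P =>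
      t.1 ≠ t.2.1 ∧ t.2.2 ⋖ t.1 ∧ t.2.2 ⋖ t.2.1).card) :
    (∀ D : Polynomial ℤ,
      ((∑ x : ↥P, Polynomial.X ^ (Finset.univ.filter fun y => y ⋖ x).card : Polynomial ℤ) -
          ∑ x : ↥P, Polynomial.X ^ (Finset.univ.filter fun y => x ⋖ y).card) =
        (Polynomial.X - 1) ^ 2 * D →
      2 * D.eval 1 = (W : ℤ) - (Vee : ℤ)) ∧
    W ≤ Vee ∧
    (W = Vee ↔ ∃ sup inf : ↥P → ↥P → ↥P,
      (∀ a b : ↥P, IsLUB {a, b} (sup a b)) ∧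
      (∀ a b : ↥P, IsGLB {a, b} (inf a b)) ∧
      ∀ a b c : ↥P, inf a (sup b c) = sup (inf a b) (inf a c)) := by
  -- counting identities
  have hWs : W = ∑ x : ↥P, (Finset.univ.filter fun y => y ⋖ x).card
      * ((Finset.univ.filter fun y => y ⋖ x).card - 1) := by
    rw [hW]; convert card_wedge (fun a b : ↥P => a ⋖ b) using 2
    ext t; simp
  have hVs : Vee = ∑ x : ↥P, (Finset.univ.filter fun y => x ⋖ y).card
      * ((Finset.univ.filter fun y => x ⋖ y).card - 1) := by
    rw [hV]; convert card_vee (fun a b : ↥P => a ⋖ b) using 2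
    ext t; simp
  -- the wedge-to-vee injection
  set wedgeSet : Finset (↥P × ↥P × ↥P) := Finset.univ.filter fun t =>
    t.2.1 ≠ t.2.2 ∧ t.2.1 ⋖ t.1 ∧ t.2.2 ⋖ t.1 with hwedgeSet
  set veeSet : Finset (↥P × ↥P × ↥P) := Finset.univ.filter fun t =>
    t.1 ≠ t.2.1 ∧ t.2.2 ⋖ t.1 ∧ t.2.2 ⋖ t.2.1 with hveeSet
  set fW : ↥P × ↥P × ↥P → ↥P × ↥P × ↥P := fun t =>
    (t.2.1, t.2.2, ⟨(t.2.1 : α) ⊓ (t.2.2 : α), hdc t.2.1.2 inf_le_left⟩) with hfW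
  have hmaps : ∀ t ∈ wedgeSet, fW t ∈ veeSet := by
    rintro ⟨x, y₁, y₂⟩ ht
    simp only [hwedgeSet, hveeSet, Finset.mem_filter, Finset.mem_univ, true_and] at ht ⊢
    obtain ⟨hne, h1, h2⟩ := ht
    have hcd := wedge_inf_covBy hdc hne h1 h2
    refine ⟨hne, ?_, ?_⟩
    · exact (covP_iff hdc _ _).2 hcd.1
    · exact (covP_iff hdc _ _).2 hcd.2
  have hinjW : Set.InjOn fW ↑wedgeSet := by
    rintro ⟨x, y₁, y₂⟩ ht ⟨x', y₁', y₂'⟩ ht' heq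
    simp only [hwedgeSet, Finset.coe_filter, Set.mem_setOf_eq, Finset.mem_univ,
      true_and] at ht ht'
    have e1 : y₁ = y₁' := congrArg (fun p => p.1) heq
    have e2 : y₂ = y₂' := congrArg (fun p => p.2.1) heq
    have hx : x = x' := by
      apply Subtype.ext
      rw [wedge_eq_sup hdc ht.1 ht.2.1 ht.2.2, wedge_eq_sup hdc ht'.1 ht'.2.1 ht'.2.2,
        e1, e2]
    rw [Prod.ext_iff, Prod.ext_iff]
    exact ⟨hx, e1, e2⟩
  have hWle : W ≤ Vee := by
    rw [hW, hV]
    exact Finset.card_le_card_of_injOn fW hmaps hinjW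
  refine ⟨?_, hWle, ?_, ?_⟩
  · -- polynomial part
    intro D hD
    have e1 : ∀ (f : ↥P → ℕ),
        (Polynomial.derivative (Polynomial.derivative
          (∑ x : ↥P, (Polynomial.X : Polynomial ℤ) ^ f x))).eval 1
          = ∑ x : ↥P, (f x : ℤ) * ((f x - 1 : ℕ) : ℤ) := by
      intro f
      rw [Polynomial.derivative_sum, Polynomial.derivative_sum, Polynomial.eval_finset_sum]
      exact Finset.sum_congr rfl fun x _ => eval_d2_pow _
    have hL : (Polynomial.derivative (Polynomial.derivative
        ((∑ x : ↥P, Polynomial.X ^ (Finset.univ.filter fun y => y ⋖ x).card : Polynomial ℤ) -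
          ∑ x : ↥P, Polynomial.X ^ (Finset.univ.filter fun y => x ⋖ y).card))).eval 1
        = (W : ℤ) - (Vee : ℤ) := by
      rw [map_sub, map_sub, Polynomial.eval_sub,
        e1 (fun x => (Finset.univ.filter fun y => y ⋖ x).card),
        e1 (fun x => (Finset.univ.filter fun y => x ⋖ y).card),
        hWs, hVs, Nat.cast_sum, Nat.cast_sum]
      simp only [Nat.cast_mul]
    rw [hD, eval_d2_target D] at hL
    exact hL
  · -- W = Vee → lattice structure
    intro hWV
    have hsurj := Finset.surj_on_of_inj_on_of_card_le (s := wedgeSet) (t := veeSet)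
      (fun a _ => fW a) (fun a ha => hmaps a ha)
      (fun a₁ a₂ h₁ h₂ he => hinjW (Finset.mem_coe.2 h₁) (Finset.mem_coe.2 h₂) he)
      (by rw [← hW, ← hV, hWV])
    have hvee : ∀ y a b : α, y ∈ P → a ∈ P → b ∈ P → a ≠ b → y ⋖ a → y ⋖ b →
        a ⊔ b ∈ P := by
      intro y a b hy ha hb hne hca hcb
      have hmem : ((⟨a, ha⟩ : ↥P), (⟨b, hb⟩ : ↥P), (⟨y, hy⟩ : ↥P)) ∈ veeSet := by
        simp only [hveeSet, Finset.mem_filter, Finset.mem_univ, true_and]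
        exact ⟨fun h => hne (congrArg Subtype.val h),
          (covP_iff hdc _ _).2 hca, (covP_iff hdc _ _).2 hcb⟩
      obtain ⟨t, ht, heq⟩ := hsurj _ hmem
      simp only [hwedgeSet, Finset.mem_filter, Finset.mem_univ, true_and] at ht
      obtain ⟨hne', h1, h2⟩ := ht
      have ea : (⟨a, ha⟩ : ↥P) = t.2.1 := congrArg (fun p => p.1) heq
      have eb : (⟨b, hb⟩ : ↥P) = t.2.2 := congrArg (fun p => p.2.1) heq
      have hx := wedge_eq_sup hdc hne' h1 h2
      rw [← ea, ← eb] at hx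
      exact hx ▸ t.1.2
    have hclosed := sup_mem_of_vee P hdc hvee
    refine ⟨fun a b => ⟨(a : α) ⊔ (b : α), hclosed _ a.2 _ b.2⟩,
      fun a b => ⟨(a : α) ⊓ (b : α), hdc a.2 inf_le_left⟩, ?_, ?_, ?_⟩
    · intro a b
      constructor
      · rintro c (rfl | rfl)
        · exact Subtype.coe_le_coe.1 le_sup_left
        · exact Subtype.coe_le_coe.1 le_sup_right
      · intro c hc
        have h1 : a ≤ c := hc (Set.mem_insert _ _)
        have h2 : b ≤ c := hc (Set.mem_insert_of_mem _ rfl)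
        exact Subtype.coe_le_coe.1 (sup_le (Subtype.coe_le_coe.2 h1) (Subtype.coe_le_coe.2 h2))
    · intro a b
      constructor
      · rintro c (rfl | rfl)
        · exact Subtype.coe_le_coe.1 inf_le_left
        · exact Subtype.coe_le_coe.1 inf_le_right
      · intro c hc
        have h1 : c ≤ a := hc (Set.mem_insert _ _)
        have h2 : c ≤ b := hc (Set.mem_insert_of_mem _ rfl)
        exact Subtype.coe_le_coe.1 (le_inf (Subtype.coe_le_coe.2 h1) (Subtype.coe_le_coe.2 h2))
    · intro a b c
      apply Subtype.ext
      exact inf_sup_left (a : α) b c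
  · -- lattice structure → W = Vee
    rintro ⟨sup, inf, hsup, hinf, -⟩
    refine le_antisymm hWle ?_
    have hclosed : ∀ a b : ↥P, (a : α) ⊔ (b : α) ∈ P := by
      intro a b
      have h1 : a ≤ sup a b := (hsup a b).1 (Set.mem_insert _ _)
      have h2 : b ≤ sup a b := (hsup a b).1 (Set.mem_insert_of_mem _ rfl)
      exact hdc (sup a b).2 (sup_le (Subtype.coe_le_coe.2 h1) (Subtype.coe_le_coe.2 h2))
    rw [hW, hV]
    set gV : ↥P × ↥P × ↥P → ↥P × ↥P × ↥P := fun t =>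
      (⟨(t.1 : α) ⊔ (t.2.1 : α), hclosed _ _⟩, t.1, t.2.1) with hgV
    -- key : third component of a vee-triple is the meet
    have hkey : ∀ x₁ x₂ y : ↥P, x₁ ≠ x₂ → y ⋖ x₁ → y ⋖ x₂ →
        (y : α) = (x₁ : α) ⊓ (x₂ : α) := by
      intro x₁ x₂ y hne h1 h2
      set m : ↥P := ⟨(x₁ : α) ⊓ (x₂ : α), hdc x₁.2 inf_le_left⟩ with hm
      have hym : y ≤ m := Subtype.coe_le_coe.1 (le_inf (Subtype.coe_le_coe.2 h1.le)
        (Subtype.coe_le_coe.2 h2.le))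
      have hmx : m ≤ x₁ := Subtype.coe_le_coe.1 inf_le_left
      rcases lt_or_eq_of_le hym with h | h
      · rcases lt_or_eq_of_le hmx with h' | h'
        · exact absurd h' (h1.2 h)
        · exfalso
          have hx12 : x₁ ≤ x₂ := by
            have : (x₁ : α) ≤ x₂ := by
              have := congrArg (Subtype.val) h'
              simp only [hm] at this
              exact inf_eq_left.1 this
            exact Subtype.coe_le_coe.1 this
          exact h2.2 (h.trans_le hmx) (lt_of_le_of_ne hx12 hne)
      · exact congrArg Subtype.val h
    have hmapsV : ∀ t ∈ veeSet, gV t ∈ wedgeSet := by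
      rintro ⟨x₁, x₂, y⟩ ht
      simp only [hveeSet, hwedgeSet, Finset.mem_filter, Finset.mem_univ, true_and] at ht ⊢
      obtain ⟨hne, h1, h2⟩ := ht
      have hk := hkey x₁ x₂ y hne h1 h2
      have hc1 : (y : α) ⋖ (x₁ : α) := (covP_iff hdc _ _).1 h1
      have hc2 : (y : α) ⋖ (x₂ : α) := (covP_iff hdc _ _).1 h2
      rw [hk] at hc1 hc2
      have hs2 : (x₂ : α) ⋖ (x₁ : α) ⊔ (x₂ : α) := covBy_sup_of_inf_covBy_left hc1
      have hs1 : (x₁ : α) ⋖ (x₁ : α) ⊔ (x₂ : α) := covBy_sup_of_inf_covBy_right hc2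
      exact ⟨hne, (covP_iff hdc _ _).2 hs1, (covP_iff hdc _ _).2 hs2⟩
    have hinjV : Set.InjOn gV ↑veeSet := by
      rintro ⟨x₁, x₂, y⟩ ht ⟨x₁', x₂', y'⟩ ht' heq
      simp only [hveeSet, Finset.coe_filter, Set.mem_setOf_eq, Finset.mem_univ,
        true_and] at ht ht'
      have e1 : x₁ = x₁' := congrArg (fun p => p.2.1) heq
      have e2 : x₂ = x₂' := congrArg (fun p => p.2.2) heq
      have e3 : y = y' := by
        apply Subtype.ext
        rw [hkey x₁ x₂ y ht.1 ht.2.1 ht.2.2, hkey x₁' x₂' y' ht'.1 ht'.2.1 ht'.2.2, e1, e2]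
      rw [Prod.ext_iff, Prod.ext_iff]
      exact ⟨e1, e2, e3⟩
    exact Finset.card_le_card_of_injOn gV hmapsV hinjV
end
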